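/- Let B_ww ⊇ B_w be a further space with ‖·‖_ww ≤ ‖·‖_w and V_ww its subspace of zero-mass elements. Suppose the family (L_δ) satisfies the hypotheses of the linear response theorem, and additionally: (QR1) the derivative operator L̇ extends to a bounded operator B_w → V_ww with ‖(L_δ − L_0)/δ − L̇‖_{B_w→B_ww} → 0; (QR2) there exists L̈h_0 ∈ V_ww with ‖((L_δ − L_0)h_0 − δ L̇h_0)/δ² − L̈h_0‖_ww → 0; (QR3) (Id − L_0)^{-1} extends to a bounded operator V_ww → V_ww. Then ‖(h_δ − h_0 − δ(Id−L_0)^{-1}L̇h_0)/δ² − (Id−L_0)^{-1}[L̈h_0 + L̇(Id−L_0)^{-1}L̇h_0]‖_ww → 0 as δ → 0. -/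

import Mathlib

open Filter Topology Set


private lemma qr_pow_apply_norm_le {E : Type*} [NormedAddCommGroup E] [NormedSpace ℝ E]
    (T : E →L[ℝ] E) : ∀ (n : ℕ) (x : E), ‖(T ^ n) x‖ ≤ ‖T‖ ^ n * ‖x‖ := by
  intro n
  induction n with
  | zero => intro x; simp
  | succ n ih =>
    intro x
    rw [pow_succ, ContinuousLinearMap.mul_apply]
    calc ‖(T ^ n) (T x)‖ ≤ ‖T‖ ^ n * ‖T x‖ := ih (T x)
      _ ≤ ‖T‖ ^ n * (‖T‖ * ‖x‖) :=
        mul_le_mul_of_nonneg_left (T.le_opNorm x) (by positivity)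
      _ = ‖T‖ ^ (n + 1) * ‖x‖ := by ring

private lemma qr_hasSum_telescope {E : Type*} [NormedAddCommGroup E]
    {w : ℕ → E} {S ℓ : E} (hs : HasSum (fun n => w n - w (n + 1)) S)
    (hl : Tendsto w atTop (𝓝 ℓ)) : S = w 0 - ℓ := by
  have h1 := hs.tendsto_sum_nat
  have h2 : (fun N => ∑ n ∈ Finset.range N, (w n - w (n + 1))) = fun N => w 0 - w N :=
    funext fun N => Finset.sum_range_sub' w N
  rw [h2] at h1
  exact tendsto_nhds_unique h1 (tendsto_const_nhds.sub hl)

set_option maxHeartbeats 3000000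

/-- **Abstract linear response theorem** (Theorem 2.1 / `thm:linresp`).
The nested spaces `B_ss ⊆ B_s ⊆ B_w` of signed measures are modeled by normed
spaces `Bss`, `Bs`, `Bw` together with injective norm-nonincreasing linear
inclusions `iss : Bss → Bs`, `is : Bs → Bw`; the continuous mass functional
`μ ↦ μ(X)` is `mass : Bw →L[ℝ] ℝ` (hence defined on all three spaces by
restriction); a Markov operator preserves the mass and positivity. -/
theorem quadratic_response
    {Bss Bs Bw : Type*}
    [NormedAddCommGroup Bss] [NormedSpace ℝ Bss]
    [NormedAddCommGroup Bs] [NormedSpace ℝ Bs]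
    [NormedAddCommGroup Bw] [NormedSpace ℝ Bw]
    [PartialOrder Bw]
    (iss : Bss →ₗ[ℝ] Bs) (is : Bs →ₗ[ℝ] Bw)
    (hiss_inj : Function.Injective iss) (his_inj : Function.Injective is)
    (hiss_norm : ∀ x : Bss, ‖iss x‖ ≤ ‖x‖) (his_norm : ∀ x : Bs, ‖is x‖ ≤ ‖x‖)
    (mass : Bw →L[ℝ] ℝ)
    (δbar : ℝ) (hδbar : 0 < δbar)
    -- the family of operators, acting (compatibly) on the three spaces
    (Lss : ℝ → Bss →L[ℝ] Bss) (Ls : ℝ → Bs →L[ℝ] Bs) (Lw : ℝ → Bw →L[ℝ] Bw)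
    (hcomm_ss : ∀ δ, δ ∈ Ico 0 δbar → ∀ x : Bss, iss (Lss δ x) = Ls δ (iss x))
    (hcomm_s : ∀ δ, δ ∈ Ico 0 δbar → ∀ x : Bs, is (Ls δ x) = Lw δ (is x))
    -- Markov: preservation of mass and of positivity
    (hmass : ∀ δ, δ ∈ Ico 0 δbar → ∀ x : Bw, mass (Lw δ x) = mass x)
    (hpos : ∀ δ, δ ∈ Ico 0 δbar → ∀ x : Bw, 0 ≤ x → 0 ≤ Lw δ x)
    -- (LR1) regularity bounds: fixed probability measures, uniformly bounded in B_ss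
    (h : ℝ → Bss) (M : ℝ)
    (hfix : ∀ δ, δ ∈ Ico 0 δbar → Lss δ (h δ) = h δ)
    (hprob_mass : ∀ δ, δ ∈ Ico 0 δbar → mass (is (iss (h δ))) = 1)
    (hprob_pos : ∀ δ, δ ∈ Ico 0 δbar → 0 ≤ is (iss (h δ)))
    (hM : ∀ δ, δ ∈ Ico 0 δbar → ‖h δ‖ ≤ M)
    -- (LR2) convergence to equilibrium for the unperturbed operator
    (a : ℕ → ℝ) (ha : Tendsto a atTop (𝓝 0))
    (hconv : ∀ g : Bss, mass (is (iss g)) = 0 → ∀ n : ℕ, ‖(Ls 0 ^ n) (iss g)‖ ≤ a n * ‖g‖)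
    -- (LR3) the resolvent `(Id - L₀)⁻¹ = ∑ L₀ⁱ` is a bounded operator on V_w
    (Res : Bw →L[ℝ] Bw)
    (hRes : ∀ g : Bw, mass g = 0 → HasSum (fun n : ℕ => (Lw 0 ^ n) g) (Res g))
    -- (LR4) small perturbation and derivative operator
    (K : ℝ)
    (hK1 : ∀ δ, δ ∈ Ico 0 δbar → ∀ f : Bs, ‖is (Ls 0 f) - is (Ls δ f)‖ ≤ K * δ * ‖f‖)
    (hK2 : ∀ δ, δ ∈ Ico 0 δbar → ∀ f : Bss, ‖iss (Lss 0 f) - iss (Lss δ f)‖ ≤ K * δ * ‖f‖)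
    (Ldot : Bw) (hLdotV : mass Ldot = 0)
    (hLdot : Tendsto
      (fun δ : ℝ => ‖δ⁻¹ • (Lw δ (is (iss (h 0))) - Lw 0 (is (iss (h 0)))) - Ldot‖)
      (𝓝[>] 0) (𝓝 0))
    -- the further, weaker space `B_ww ⊇ B_w`
    {Bww : Type*} [NormedAddCommGroup Bww] [NormedSpace ℝ Bww]
    (iw : Bw →ₗ[ℝ] Bww) (hiw_inj : Function.Injective iw)
    (hiw_norm : ∀ x : Bw, ‖iw x‖ ≤ ‖x‖)
    (massww : Bww →L[ℝ] ℝ) (hmass_compat : ∀ x : Bw, massww (iw x) = mass x)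
    (Lww : ℝ → Bww →L[ℝ] Bww)
    (hcomm_w : ∀ δ, δ ∈ Ico 0 δbar → ∀ x : Bw, iw (Lw δ x) = Lww δ (iw x))
    -- (QR1) the derivative operator extends to a bounded operator `B_w → V_ww`,
    -- with uniform convergence of the divided differences in operator norm
    (Ldotop : Bw →L[ℝ] Bww)
    (hLdotopV : ∀ f : Bw, massww (Ldotop f) = 0)
    (hLdotop_ext : Ldotop (is (iss (h 0))) = iw Ldot)
    (hQR1 : ∀ ε > (0:ℝ), ∃ δ₀ > (0:ℝ), ∀ δ, 0 < δ → δ < δ₀ → δ < δbar →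
      ∀ f : Bw, ‖δ⁻¹ • (iw (Lw δ f) - iw (Lw 0 f)) - Ldotop f‖ ≤ ε * ‖f‖)
    -- (QR2) second derivative operator at h₀
    (Lddot : Bww) (hLddotV : massww Lddot = 0)
    (hQR2 : Tendsto (fun δ : ℝ =>
        ‖(δ ^ 2)⁻¹ • (iw (Lw δ (is (iss (h 0))) - Lw 0 (is (iss (h 0)))) - δ • iw Ldot)
          - Lddot‖) (𝓝[>] 0) (𝓝 0))
    -- (QR3) the resolvent extends to a bounded operator on V_ww
    (Resww : Bww →L[ℝ] Bww)
    (hResww : ∀ g : Bww, massww g = 0 → HasSum (fun n : ℕ => (Lww 0 ^ n) g) (Resww g)) :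
    -- order-two Taylor expansion of δ ↦ h_δ, with convergence in the ww-norm
    Tendsto (fun δ : ℝ =>
        ‖(δ ^ 2)⁻¹ • (iw (is (iss (h δ)) - is (iss (h 0))) - δ • iw (Res Ldot))
          - Resww (Lddot + Ldotop (Res Ldot))‖) (𝓝[>] 0) (𝓝 0) := by
  classical
  have h0mem : (0:ℝ) ∈ Ico (0:ℝ) δbar := ⟨le_refl 0, hδbar⟩
  have hM0 : (0:ℝ) ≤ M := le_trans (norm_nonneg _) (hM 0 h0mem)
  set K' : ℝ := max K 0 with hK'def
  have hK'0 : (0:ℝ) ≤ K' := le_max_right K 0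
  have hK1' : ∀ δ, δ ∈ Ico (0:ℝ) δbar → ∀ f : Bs,
      ‖is (Ls 0 f) - is (Ls δ f)‖ ≤ K' * δ * ‖f‖ := by
    intro δ hδ f
    refine (hK1 δ hδ f).trans ?_
    exact mul_le_mul_of_nonneg_right
      (mul_le_mul_of_nonneg_right (le_max_left K 0) hδ.1) (norm_nonneg f)
  have hK2' : ∀ δ, δ ∈ Ico (0:ℝ) δbar → ∀ f : Bss,
      ‖iss (Lss 0 f) - iss (Lss δ f)‖ ≤ K' * δ * ‖f‖ := by
    intro δ hδ f
    refine (hK2 δ hδ f).trans ?_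
    exact mul_le_mul_of_nonneg_right
      (mul_le_mul_of_nonneg_right (le_max_left K 0) hδ.1) (norm_nonneg f)
  -- commutation with powers
  have powS : ∀ (n : ℕ) (x : Bs), is ((Ls 0 ^ n) x) = (Lw 0 ^ n) (is x) := by
    intro n
    induction n with
    | zero => intro x; simp
    | succ n ih =>
      intro x
      rw [pow_succ, ContinuousLinearMap.mul_apply, ih, hcomm_s 0 h0mem,
        pow_succ, ContinuousLinearMap.mul_apply]
  have powW : ∀ (n : ℕ) (x : Bw), iw ((Lw 0 ^ n) x) = (Lww 0 ^ n) (iw x) := by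
    intro n
    induction n with
    | zero => intro x; simp
    | succ n ih =>
      intro x
      rw [pow_succ, ContinuousLinearMap.mul_apply, ih, hcomm_w 0 h0mem,
        pow_succ, ContinuousLinearMap.mul_apply]
  have massPow : ∀ (n : ℕ) (x : Bw), mass ((Lw 0 ^ n) x) = mass x := by
    intro n
    induction n with
    | zero => intro x; simp
    | succ n ih =>
      intro x
      rw [pow_succ, ContinuousLinearMap.mul_apply, ih, hmass 0 h0mem]
  -- fixed points in B_w
  have fixW : ∀ δ ∈ Ico (0:ℝ) δbar, Lw δ (is (iss (h δ))) = is (iss (h δ)) := by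
    intro δ hδ
    rw [← hcomm_s δ hδ, ← hcomm_ss δ hδ, hfix δ hδ]
  have massdiff : ∀ δ ∈ Ico (0:ℝ) δbar, mass (is (iss (h δ)) - is (iss (h 0))) = 0 := by
    intro δ hδ
    rw [map_sub, hprob_mass δ hδ, hprob_mass 0 h0mem, sub_self]
  -- resolvent facts
  have hRsum : HasSum (fun n : ℕ => (Lw 0 ^ n) Ldot) (Res Ldot) := hRes Ldot hLdotV
  have massR0 : mass (Res Ldot) = 0 := by
    have h1 : HasSum (fun n : ℕ => mass ((Lw 0 ^ n) Ldot)) (mass (Res Ldot)) :=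
      mass.hasSum hRsum
    have h2 : (fun n : ℕ => mass ((Lw 0 ^ n) Ldot)) = fun _ => (0:ℝ) :=
      funext fun n => by rw [massPow, hLdotV]
    rw [h2] at h1
    exact h1.unique hasSum_zero
  have hL4 : Res Ldot - Lw 0 (Res Ldot) = Ldot := by
    have h1 : HasSum (fun n : ℕ => Lw 0 ((Lw 0 ^ n) Ldot)) (Lw 0 (Res Ldot)) :=
      (Lw 0).hasSum hRsum
    have h2 := hRsum.sub h1
    have e : (fun n : ℕ => (Lw 0 ^ n) Ldot - Lw 0 ((Lw 0 ^ n) Ldot))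
        = fun n : ℕ => (Lw 0 ^ n) Ldot - (Lw 0 ^ (n + 1)) Ldot := by
      funext n
      rw [pow_succ', ContinuousLinearMap.mul_apply]
    rw [e] at h2
    have h3 := qr_hasSum_telescope h2 hRsum.summable.tendsto_atTop_zero
    simpa using h3
  have hL6 : Tendsto (fun N : ℕ => (Lw 0 ^ N) (Res Ldot)) atTop (𝓝 0) := by
    have key : ∀ N : ℕ, (Lw 0 ^ N) (Res Ldot)
        = Res Ldot - ∑ i ∈ Finset.range N, (Lw 0 ^ i) Ldot := by
      intro N
      have h1 : HasSum (fun n : ℕ => (Lw 0 ^ N) ((Lw 0 ^ n) Ldot)) ((Lw 0 ^ N) (Res Ldot)) :=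
        (Lw 0 ^ N).hasSum hRsum
      have e : (fun n : ℕ => (Lw 0 ^ N) ((Lw 0 ^ n) Ldot))
          = fun n : ℕ => (Lw 0 ^ (n + N)) Ldot := by
        funext n
        rw [add_comm, pow_add, ContinuousLinearMap.mul_apply]
      rw [e] at h1
      have h2 := (hasSum_nat_add_iff (f := fun n : ℕ => (Lw 0 ^ n) Ldot) N).mp h1
      exact eq_sub_of_add_eq (hRsum.unique h2).symm
    rw [funext key]
    have h4 : Tendsto (fun N : ℕ => Res Ldot - ∑ i ∈ Finset.range N, (Lw 0 ^ i) Ldot)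
        atTop (𝓝 (Res Ldot - Res Ldot)) :=
      tendsto_const_nhds.sub hRsum.tendsto_sum_nat
    simpa using h4
  have ResLeft : ∀ y : Bw, mass y = 0 →
      Tendsto (fun N : ℕ => (Lw 0 ^ N) y) atTop (𝓝 0) →
      Res (y - Lw 0 y) = y := by
    intro y hy hlim
    have hy2 : mass (y - Lw 0 y) = 0 := by rw [map_sub, hmass 0 h0mem, hy, sub_self]
    have h1 := hRes (y - Lw 0 y) hy2
    have e : (fun n : ℕ => (Lw 0 ^ n) (y - Lw 0 y))
        = fun n : ℕ => (Lw 0 ^ n) y - (Lw 0 ^ (n + 1)) y := by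
      funext n
      rw [map_sub, pow_succ, ContinuousLinearMap.mul_apply]
    rw [e] at h1
    have h3 := qr_hasSum_telescope h1 hlim
    simpa using h3
  have hL5 : ∀ δ ∈ Ico (0:ℝ) δbar,
      Tendsto (fun N : ℕ => (Lw 0 ^ N) (is (iss (h δ)) - is (iss (h 0)))) atTop (𝓝 0) := by
    intro δ hδ
    have hg0 : mass (is (iss (h δ - h 0))) = 0 := by
      simp only [map_sub]
      rw [hprob_mass δ hδ, hprob_mass 0 h0mem, sub_self]
    refine squeeze_zero_norm (a := fun N => a N * ‖h δ - h 0‖) ?_ ?_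
    · intro N
      have e : is (iss (h δ)) - is (iss (h 0)) = is (iss (h δ - h 0)) := by
        simp only [map_sub]
      rw [e, ← powS]
      exact (his_norm _).trans (hconv (h δ - h 0) hg0 N)
    · simpa using ha.mul_const ‖h δ - h 0‖
  -- smallness of h δ - h 0 in B_s
  have Slim : Tendsto (fun δ : ℝ => ‖iss (h δ) - iss (h 0)‖) (𝓝[>] (0:ℝ)) (𝓝 0) := by
    rw [Metric.tendsto_nhdsWithin_nhds]
    intro ε hε
    have haN : ∀ᶠ N in atTop, |a N| * (2 * M) < ε / 2 := by
      have h1 : Tendsto (fun N => |a N| * (2 * M)) atTop (𝓝 0) := by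
        simpa using ha.abs.mul_const (2 * M)
      exact h1.eventually_lt_const (by linarith)
    obtain ⟨N, hN⟩ := haN.exists
    have hSB : (0:ℝ) ≤ ∑ n ∈ Finset.range N, ‖Ls 0‖ ^ n :=
      Finset.sum_nonneg fun i _ => pow_nonneg (norm_nonneg _) i
    set B : ℝ := K' * M * ∑ n ∈ Finset.range N, ‖Ls 0‖ ^ n with hBdef
    have hB0 : 0 ≤ B := by positivity
    refine ⟨min δbar (ε / 2 / (B + 1)), by positivity, ?_⟩
    intro δ hδmem hδdist
    have hδ0 : (0:ℝ) < δ := hδmem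
    have hδd : δ < min δbar (ε / 2 / (B + 1)) := by
      rwa [Real.dist_eq, sub_zero, abs_of_pos hδ0] at hδdist
    have hδm : δ ∈ Ico (0:ℝ) δbar := ⟨hδ0.le, lt_of_lt_of_le hδd (min_le_left _ _)⟩
    rw [Real.dist_eq, sub_zero, abs_of_nonneg (norm_nonneg _)]
    set s : Bs := iss (h δ) - iss (h 0) with hsdef
    set c : Bs := iss (h δ) - iss (Lss 0 (h δ)) with hcdef
    have hstep : s = Ls 0 s + c := by
      simp only [hsdef, hcdef, map_sub]
      rw [← hcomm_ss 0 h0mem, ← hcomm_ss 0 h0mem, hfix 0 h0mem]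
      abel
    have expand : ∀ Nn : ℕ, s = (Ls 0 ^ Nn) s + ∑ n ∈ Finset.range Nn, (Ls 0 ^ n) c := by
      intro Nn
      induction Nn with
      | zero => simp
      | succ m ih =>
        rw [Finset.sum_range_succ, pow_succ, ContinuousLinearMap.mul_apply]
        calc s = (Ls 0 ^ m) s + ∑ n ∈ Finset.range m, (Ls 0 ^ n) c := ih
          _ = (Ls 0 ^ m) (Ls 0 s + c) + ∑ n ∈ Finset.range m, (Ls 0 ^ n) c := by
              rw [← hstep]
          _ = _ := by rw [map_add]; abel
    have hcbound : ‖c‖ ≤ K' * δ * M := by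
      have h1 : ‖iss (Lss 0 (h δ)) - iss (Lss δ (h δ))‖ ≤ K' * δ * ‖h δ‖ := hK2' δ hδm (h δ)
      rw [hfix δ hδm] at h1
      rw [hcdef]
      calc ‖iss (h δ) - iss (Lss 0 (h δ))‖ = ‖iss (Lss 0 (h δ)) - iss (h δ)‖ :=
            norm_sub_rev _ _
        _ ≤ K' * δ * ‖h δ‖ := h1
        _ ≤ K' * δ * M := by
            apply mul_le_mul_of_nonneg_left (hM δ hδm)
            positivity
    have hsnorm : ‖s‖ ≤ |a N| * (2 * M) + δ * B := by
      rw [expand N]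
      refine (norm_add_le _ _).trans (add_le_add ?_ ?_)
      · have hg0 : mass (is (iss (h δ - h 0))) = 0 := by
          simp only [map_sub]
          rw [hprob_mass δ hδm, hprob_mass 0 h0mem, sub_self]
        have e : s = iss (h δ - h 0) := by rw [hsdef, map_sub]
        rw [e]
        refine (hconv (h δ - h 0) hg0 N).trans ?_
        have h2 : ‖h δ - h 0‖ ≤ 2 * M := by
          refine (norm_sub_le _ _).trans ?_
          have := hM δ hδm
          have := hM 0 h0mem
          linarith
        calc a N * ‖h δ - h 0‖ ≤ |a N| * ‖h δ - h 0‖ :=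
              mul_le_mul_of_nonneg_right (le_abs_self _) (norm_nonneg _)
          _ ≤ |a N| * (2 * M) := mul_le_mul_of_nonneg_left h2 (abs_nonneg _)
      · refine (norm_sum_le _ _).trans ?_
        have h3 : ∀ n ∈ Finset.range N, ‖(Ls 0 ^ n) c‖ ≤ ‖Ls 0‖ ^ n * (K' * δ * M) := by
          intro n _
          exact (qr_pow_apply_norm_le (Ls 0) n c).trans
            (mul_le_mul_of_nonneg_left hcbound (by positivity))
        refine (Finset.sum_le_sum h3).trans ?_
        rw [← Finset.sum_mul, hBdef]
        apply le_of_eq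
        ring
    have hδB : δ * B ≤ ε / 2 := by
      have hd2 : δ ≤ ε / 2 / (B + 1) := le_of_lt (lt_of_lt_of_le hδd (min_le_right _ _))
      calc δ * B ≤ ε / 2 / (B + 1) * B := mul_le_mul_of_nonneg_right hd2 hB0
        _ ≤ ε / 2 := by
            rw [div_mul_eq_mul_div, div_le_iff₀ (by linarith)]
            nlinarith
    linarith
  -- the resolvent identity for h δ - h 0
  have ResId : ∀ δ ∈ Ico (0:ℝ) δbar,
      is (iss (h δ)) - is (iss (h 0))
        = Res (Lw δ (is (iss (h δ))) - Lw 0 (is (iss (h δ)))) := by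
    intro δ hδ
    have key := ResLeft (is (iss (h δ)) - is (iss (h 0))) (massdiff δ hδ) (hL5 δ hδ)
    have e : is (iss (h δ)) - is (iss (h 0)) - Lw 0 (is (iss (h δ)) - is (iss (h 0)))
        = Lw δ (is (iss (h δ))) - Lw 0 (is (iss (h δ))) := by
      rw [map_sub, fixW 0 h0mem, fixW δ hδ]
      abel
    rw [← e, key]
  -- uniform bound on the divided differences
  have fbound : ∀ δ, 0 < δ → δ < δbar →
      ‖δ⁻¹ • (is (iss (h δ)) - is (iss (h 0)))‖ ≤ ‖Res‖ * (K' * M) := by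
    intro δ hδ0 hδb
    have hδm : δ ∈ Ico (0:ℝ) δbar := ⟨hδ0.le, hδb⟩
    rw [ResId δ hδm, ← map_smul]
    refine (Res.le_opNorm _).trans ?_
    refine mul_le_mul_of_nonneg_left ?_ (norm_nonneg (Res : Bw →L[ℝ] Bw))
    rw [norm_smul, Real.norm_eq_abs, abs_of_pos (inv_pos.mpr hδ0)]
    have h1 : ‖Lw δ (is (iss (h δ))) - Lw 0 (is (iss (h δ)))‖ ≤ K' * δ * M := by
      rw [← hcomm_s δ hδm, ← hcomm_s 0 h0mem]
      calc ‖is (Ls δ (iss (h δ))) - is (Ls 0 (iss (h δ)))‖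
          = ‖is (Ls 0 (iss (h δ))) - is (Ls δ (iss (h δ)))‖ := norm_sub_rev _ _
        _ ≤ K' * δ * ‖iss (h δ)‖ := hK1' δ hδm _
        _ ≤ K' * δ * M :=
            mul_le_mul_of_nonneg_left ((hiss_norm _).trans (hM δ hδm)) (by positivity)
    calc δ⁻¹ * ‖Lw δ (is (iss (h δ))) - Lw 0 (is (iss (h δ)))‖
        ≤ δ⁻¹ * (K' * δ * M) := mul_le_mul_of_nonneg_left h1 (by positivity)
      _ = K' * M := by field_simp
  -- linear response in B_w
  have LRlim : Tendsto (fun δ : ℝ =>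
      ‖δ⁻¹ • (is (iss (h δ)) - is (iss (h 0))) - Res Ldot‖) (𝓝[>] (0:ℝ)) (𝓝 0) := by
    have hbound : ∀ᶠ δ in 𝓝[>] (0:ℝ),
        ‖δ⁻¹ • (is (iss (h δ)) - is (iss (h 0))) - Res Ldot‖
          ≤ ‖Res‖ * (K' * ‖iss (h δ) - iss (h 0)‖
              + ‖δ⁻¹ • (Lw δ (is (iss (h 0))) - Lw 0 (is (iss (h 0)))) - Ldot‖) := by
      filter_upwards [Ioo_mem_nhdsGT_of_mem h0mem] with δ hδ
      obtain ⟨hδ0, hδb⟩ := hδ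
      have hδm : δ ∈ Ico (0:ℝ) δbar := ⟨hδ0.le, hδb⟩
      have hid : δ⁻¹ • (is (iss (h δ)) - is (iss (h 0))) - Res Ldot
          = Res (δ⁻¹ • (Lw δ (is (iss (h δ))) - Lw 0 (is (iss (h δ)))) - Ldot) := by
        rw [map_sub, map_smul, ← ResId δ hδm]
      rw [hid]
      refine (Res.le_opNorm _).trans ?_
      refine mul_le_mul_of_nonneg_left ?_ (norm_nonneg (Res : Bw →L[ℝ] Bw))
      have split : δ⁻¹ • (Lw δ (is (iss (h δ))) - Lw 0 (is (iss (h δ)))) - Ldot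
          = δ⁻¹ • (Lw δ (is (iss (h δ)) - is (iss (h 0)))
              - Lw 0 (is (iss (h δ)) - is (iss (h 0))))
            + (δ⁻¹ • (Lw δ (is (iss (h 0))) - Lw 0 (is (iss (h 0)))) - Ldot) := by
        simp only [map_sub, smul_sub]
        abel
      rw [split]
      refine (norm_add_le _ _).trans (add_le_add ?_ le_rfl)
      rw [norm_smul, Real.norm_eq_abs, abs_of_pos (inv_pos.mpr hδ0)]
      have h1 : ‖Lw δ (is (iss (h δ)) - is (iss (h 0)))
          - Lw 0 (is (iss (h δ)) - is (iss (h 0)))‖ ≤ K' * δ * ‖iss (h δ) - iss (h 0)‖ := by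
        have e : is (iss (h δ)) - is (iss (h 0)) = is (iss (h δ) - iss (h 0)) := by
          rw [map_sub]
        rw [e, ← hcomm_s δ hδm, ← hcomm_s 0 h0mem, norm_sub_rev]
        exact hK1' δ hδm _
      have hδne : δ ≠ 0 := ne_of_gt hδ0
      calc δ⁻¹ * ‖Lw δ (is (iss (h δ)) - is (iss (h 0)))
            - Lw 0 (is (iss (h δ)) - is (iss (h 0)))‖
          ≤ δ⁻¹ * (K' * δ * ‖iss (h δ) - iss (h 0)‖) :=
            mul_le_mul_of_nonneg_left h1 (by positivity)
        _ = K' * ‖iss (h δ) - iss (h 0)‖ := by field_simp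
    have hRHS : Tendsto (fun δ : ℝ => ‖Res‖ * (K' * ‖iss (h δ) - iss (h 0)‖
        + ‖δ⁻¹ • (Lw δ (is (iss (h 0))) - Lw 0 (is (iss (h 0)))) - Ldot‖))
        (𝓝[>] (0:ℝ)) (𝓝 0) := by
      have h5 := ((Slim.const_mul K').add hLdot).const_mul ‖Res‖
      simpa using h5
    exact squeeze_zero' (Eventually.of_forall fun δ => norm_nonneg _) hbound hRHS
  -- the three error terms
  set T : Bww := Lddot + Ldotop (Res Ldot) with hTdef
  set P : ℝ → Bww := fun δ =>
    δ⁻¹ • (iw (Lw δ (δ⁻¹ • (is (iss (h δ)) - is (iss (h 0)))))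
      - iw (Lw 0 (δ⁻¹ • (is (iss (h δ)) - is (iss (h 0))))))
      - Ldotop (δ⁻¹ • (is (iss (h δ)) - is (iss (h 0)))) with hPdef
  set Q : ℝ → Bww := fun δ =>
    Ldotop (δ⁻¹ • (is (iss (h δ)) - is (iss (h 0)))) - Ldotop (Res Ldot) with hQdef
  set R : ℝ → Bww := fun δ =>
    (δ ^ 2)⁻¹ • (iw (Lw δ (is (iss (h 0))) - Lw 0 (is (iss (h 0)))) - δ • iw Ldot)
      - Lddot with hRdef
  have TP : Tendsto (fun δ => ‖P δ‖) (𝓝[>] (0:ℝ)) (𝓝 0) := by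
    rw [Metric.tendsto_nhdsWithin_nhds]
    intro ε hε
    set C : ℝ := ‖Res‖ * (K' * M) with hCdef
    have hC0 : 0 ≤ C := by positivity
    obtain ⟨δ₀, hδ₀, hQ1⟩ := hQR1 (ε / (C + 1)) (by positivity)
    refine ⟨min δ₀ δbar, by positivity, ?_⟩
    intro δ hδmem hδdist
    have hδ0 : (0:ℝ) < δ := hδmem
    have hδlt : δ < min δ₀ δbar := by
      rwa [Real.dist_eq, sub_zero, abs_of_pos hδ0] at hδdist
    rw [Real.dist_eq, sub_zero, abs_of_nonneg (norm_nonneg _)]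
    have hb := hQ1 δ hδ0 (lt_of_lt_of_le hδlt (min_le_left _ _))
      (lt_of_lt_of_le hδlt (min_le_right _ _))
      (δ⁻¹ • (is (iss (h δ)) - is (iss (h 0))))
    calc ‖P δ‖ ≤ ε / (C + 1) * ‖δ⁻¹ • (is (iss (h δ)) - is (iss (h 0)))‖ := by
          simp only [hPdef]
          exact hb
      _ ≤ ε / (C + 1) * C :=
          mul_le_mul_of_nonneg_left
            (fbound δ hδ0 (lt_of_lt_of_le hδlt (min_le_right _ _))) (by positivity)
      _ < ε := by
          rw [div_mul_eq_mul_div, div_lt_iff₀ (by linarith)]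
          nlinarith
  have TQ : Tendsto (fun δ => ‖Q δ‖) (𝓝[>] (0:ℝ)) (𝓝 0) := by
    apply squeeze_zero (g := fun δ : ℝ =>
        ‖Ldotop‖ * ‖δ⁻¹ • (is (iss (h δ)) - is (iss (h 0))) - Res Ldot‖)
      (fun δ => norm_nonneg _)
    · intro δ
      simp only [hQdef]
      rw [← map_sub]
      exact Ldotop.le_opNorm _
    · simpa using LRlim.const_mul ‖Ldotop‖
  have TR : Tendsto (fun δ => ‖R δ‖) (𝓝[>] (0:ℝ)) (𝓝 0) := by
    simpa only [hRdef] using hQR2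
  -- main estimate
  have main : ∀ᶠ δ in 𝓝[>] (0:ℝ),
      ‖(δ ^ 2)⁻¹ • (iw (is (iss (h δ)) - is (iss (h 0))) - δ • iw (Res Ldot)) - Resww T‖
        ≤ ‖Resww‖ * (‖P δ‖ + ‖Q δ‖ + ‖R δ‖) := by
    filter_upwards [Ioo_mem_nhdsGT_of_mem h0mem] with δ hδ
    obtain ⟨hδ0, hδb⟩ := hδ
    have hδm : δ ∈ Ico (0:ℝ) δbar := ⟨hδ0.le, hδb⟩
    have hδne : δ ≠ 0 := ne_of_gt hδ0
    set g : Bw := (δ ^ 2)⁻¹ • (is (iss (h δ)) - is (iss (h 0)) - δ • Res Ldot) with hgdef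
    have hgoal1 : (δ ^ 2)⁻¹ • (iw (is (iss (h δ)) - is (iss (h 0))) - δ • iw (Res Ldot))
        = iw g := by
      rw [hgdef]
      simp [map_sub, map_smul]
    rw [hgoal1]
    have hmassg : mass g = 0 := by
      rw [hgdef]
      simp only [map_smul, map_sub, smul_eq_mul]
      rw [hprob_mass δ hδm, hprob_mass 0 h0mem, massR0]
      ring
    have hpowg : Tendsto (fun N : ℕ => (Lw 0 ^ N) g) atTop (𝓝 0) := by
      have e : (fun N : ℕ => (Lw 0 ^ N) g)
          = fun N => (δ ^ 2)⁻¹ • ((Lw 0 ^ N) (is (iss (h δ)) - is (iss (h 0)))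
              - δ • (Lw 0 ^ N) (Res Ldot)) := by
        funext N
        rw [hgdef]
        simp [map_sub, map_smul]
      rw [e]
      have h6 := (((hL5 δ hδm).sub (hL6.const_smul δ)).const_smul ((δ ^ 2)⁻¹ : ℝ))
      simpa using h6
    have hmass2 : massww (iw (g - Lw 0 g)) = 0 := by
      rw [hmass_compat, map_sub, hmass 0 h0mem, hmassg, sub_self]
    have hsum := hResww (iw (g - Lw 0 g)) hmass2
    have e2 : (fun n : ℕ => (Lww 0 ^ n) (iw (g - Lw 0 g)))
        = fun n : ℕ => (Lww 0 ^ n) (iw g) - (Lww 0 ^ (n + 1)) (iw g) := by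
      funext n
      rw [map_sub, map_sub, hcomm_w 0 h0mem, pow_succ, ContinuousLinearMap.mul_apply]
    rw [e2] at hsum
    have hlim2 : Tendsto (fun N : ℕ => (Lww 0 ^ N) (iw g)) atTop (𝓝 0) := by
      have e3 : (fun N : ℕ => (Lww 0 ^ N) (iw g)) = fun N => iw ((Lw 0 ^ N) g) :=
        funext fun N => (powW N g).symm
      rw [e3]
      refine squeeze_zero_norm (a := fun N => ‖(Lw 0 ^ N) g‖) ?_ ?_
      · intro N
        exact hiw_norm _
      · exact tendsto_zero_iff_norm_tendsto_zero.mp hpowg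
    have hinv : Resww (iw (g - Lw 0 g)) = iw g := by
      have h7 := qr_hasSum_telescope hsum hlim2
      simpa using h7
    have hfix0 : Lw 0 (is (iss (h 0))) = is (iss (h 0)) := fixW 0 h0mem
    have hfixδ : Lw δ (is (iss (h δ))) = is (iss (h δ)) := fixW δ hδm
    have e4 : is (iss (h δ)) - Lw 0 (is (iss (h δ)))
        = Lw δ (is (iss (h δ))) - Lw 0 (is (iss (h δ))) := by rw [hfixδ]
    have e5 : is (iss (h 0)) - Lw 0 (is (iss (h 0))) = 0 := by rw [hfix0, sub_self]
    have hz : g - Lw 0 g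
        = (δ ^ 2)⁻¹ • ((Lw δ (is (iss (h δ))) - Lw 0 (is (iss (h δ)))) - δ • Ldot) := by
      rw [hgdef, map_smul, ← smul_sub]
      congr 1
      calc is (iss (h δ)) - is (iss (h 0)) - δ • Res Ldot
            - Lw 0 (is (iss (h δ)) - is (iss (h 0)) - δ • Res Ldot)
          = (is (iss (h δ)) - Lw 0 (is (iss (h δ))))
            - (is (iss (h 0)) - Lw 0 (is (iss (h 0))))
            - δ • (Res Ldot - Lw 0 (Res Ldot)) := by
            simp only [map_sub, map_smul]
            module
        _ = Lw δ (is (iss (h δ))) - Lw 0 (is (iss (h δ))) - δ • Ldot := by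
            rw [e4, e5, hL4]
            module
    have hD : iw (g - Lw 0 g) - T = P δ + Q δ + R δ := by
      rw [hz, hTdef, hPdef, hQdef, hRdef]
      simp only [map_smul, map_sub]
      module
    have hfinal : iw g - Resww T = Resww (P δ + Q δ + R δ) := by
      rw [← hD, map_sub, hinv]
    rw [hfinal]
    refine (Resww.le_opNorm _).trans ?_
    refine mul_le_mul_of_nonneg_left ?_ (norm_nonneg _)
    exact (norm_add_le _ _).trans (add_le_add (norm_add_le _ _) le_rfl)
  have hRHS : Tendsto (fun δ : ℝ => ‖Resww‖ * (‖P δ‖ + ‖Q δ‖ + ‖R δ‖))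
      (𝓝[>] (0:ℝ)) (𝓝 0) := by
    have h8 := (((TP.add TQ).add TR).const_mul ‖Resww‖)
    simpa using h8
  exact squeeze_zero' (Eventually.of_forall fun δ => norm_nonneg _) main hRHS
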